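/- Define rational numbers C_p by C_0 = 1 and Σ_{q=0}^p C_{p−q}/(2q+1)! = 0 for p ≥ 1. Then for every integer k ≥ 0 and every positive integer N, S_k(N) = (k!/2^{k+1})·Σ_{q=0}^{⌊k/2⌋} C_q·((2N+1)^{k+1−2q} − 1)/(k+1−2q)!, where S_k(N) = Σ_{n=1}^N n^k. -/

import Mathlib

open Finset

/-- The power sum `S_k(N) = ∑_{n=1}^N n^k`. -/
def powerSum (k N : ℕ) : ℚ := ∑ n ∈ Finset.Icc 1 N, (n : ℚ) ^ k

lemma powerSum_range (k N : ℕ) : powerSum k N = ∑ i ∈ range N, ((i:ℚ)+1)^k := by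
  unfold powerSum
  rw [← Finset.Ico_add_one_right_eq_Icc, Finset.sum_Ico_eq_sum_range]
  simp [add_comm]


lemma telescope (m N : ℕ) :
    ((2*(N:ℚ)+1))^m - 1 = ∑ i ∈ range N, ((2*((i:ℚ)+1)+1)^m - (2*((i:ℚ)+1)-1)^m) := by
  have := Finset.sum_range_sub (fun i => (2*(i:ℚ)+1)^m) N
  simp only [Nat.cast_add, Nat.cast_one, Nat.cast_zero] at this
  rw [show ((2*(N:ℚ)+1))^m - 1 = (2 * (N:ℚ) + 1) ^ m - (2 * (0:ℚ) + 1) ^ m by ring, ← this]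
  exact Finset.sum_congr rfl fun i _ => by ring_nf


lemma binom (m : ℕ) (x : ℚ) :
    (2*x+1)^m - (2*x-1)^m
      = ∑ j ∈ range (m+1), (m.choose j : ℚ) * (2*x)^j * (1 - (-1:ℚ)^(m-j)) := by
  have h1 : (2*x+1)^m = ∑ j ∈ range (m+1), (2*x)^j * 1^(m-j) * (m.choose j : ℚ) :=
    add_pow (2*x) 1 m
  have h2 : (2*x-1)^m = ∑ j ∈ range (m+1), (2*x)^j * (-1:ℚ)^(m-j) * (m.choose j : ℚ) := by
    have := add_pow (2*x) (-1 : ℚ) m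
    simpa [sub_eq_add_neg] using this
  rw [h1, h2, ← Finset.sum_sub_distrib]
  exact Finset.sum_congr rfl fun j _ => by ring

lemma key (m N : ℕ) :
    ((2*(N:ℚ)+1))^m - 1
      = ∑ j ∈ range (m+1),
          (m.choose j : ℚ) * 2^j * (1 - (-1:ℚ)^(m-j)) * powerSum j N := by
  rw [telescope]
  simp only [binom]
  rw [Finset.sum_comm]
  apply Finset.sum_congr rfl
  intro j _
  rw [powerSum_range, Finset.mul_sum]
  apply Finset.sum_congr rfl
  intro i _
  rw [mul_pow]; ring

lemma tri_swap (K : ℕ) (f : ℕ → ℕ → ℚ) :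
    ∑ q ∈ range (K+1), ∑ p ∈ Icc q K, f q p
      = ∑ p ∈ range (K+1), ∑ q ∈ range (p+1), f q p := by
  rw [Finset.sum_sigma', Finset.sum_sigma']
  refine Finset.sum_nbij' (fun a => ⟨a.2, a.1⟩) (fun a => ⟨a.2, a.1⟩) ?_ ?_ ?_ ?_ ?_ <;>
    rintro ⟨x, y⟩ h <;>
    simp only [Finset.mem_sigma, Finset.mem_range, Finset.mem_Icc] at * <;> omega


lemma reindex (k q N : ℕ) (hq : q ≤ k/2) :
    ∑ j ∈ range (k+1-2*q+1),
        ((k+1-2*q).choose j : ℚ) * 2^j * (1 - (-1:ℚ)^(k+1-2*q-j)) * powerSum j N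
      = ∑ p ∈ Icc q (k/2),
          ((k+1-2*q).choose (k-2*p) : ℚ) * 2^(k-2*p) * 2 * powerSum (k-2*p) N := by
  rw [← Finset.sum_filter_of_ne (p := fun j => (k+1-2*q-j) % 2 = 1)
      (fun j hj hne => ?_)]
  · refine Finset.sum_nbij' (fun j => (k-j)/2) (fun p => k - 2*p) ?_ ?_ ?_ ?_ ?_
    · intro j hj
      simp only [Finset.mem_filter, Finset.mem_range, Finset.mem_Icc] at *
      omega
    · intro p hp
      simp only [Finset.mem_filter, Finset.mem_range, Finset.mem_Icc] at *
      omega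
    · intro j hj
      simp only [Finset.mem_filter, Finset.mem_range] at hj
      show k - 2*((k-j)/2) = j
      omega
    · intro p hp
      simp only [Finset.mem_Icc] at hp
      show (k - (k - 2*p))/2 = p
      omega
    · intro j hj
      simp only [Finset.mem_filter, Finset.mem_range] at hj
      have h1 : k - 2*((k-j)/2) = j := by omega
      have h2 : (1 - (-1:ℚ)^(k+1-2*q-j)) = 2 := by
        have : Odd (k+1-2*q-j) := Nat.odd_iff.mpr hj.2
        rw [this.neg_one_pow]; norm_num
      rw [h1, h2]
  · by_contra hP
    apply hne
    have : Even (k+1-2*q-j) := Nat.even_iff.mpr (by omega)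
    rw [this.neg_one_pow]
    norm_num

theorem powerSum_eq_C_expansion (C : ℕ → ℚ) (hC0 : C 0 = 1)
    (hCrec : ∀ p : ℕ, 1 ≤ p → ∑ q ∈ Finset.range (p + 1), C (p - q) / (Nat.factorial (2 * q + 1) : ℚ) = 0) (k N : ℕ) (hN : 1 ≤ N) :
    powerSum k N =
      ((Nat.factorial k : ℚ) / 2 ^ (k + 1)) *
        ∑ q ∈ Finset.range (k / 2 + 1),
          C q * ((2 * (N : ℚ) + 1) ^ (k + 1 - 2 * q) - 1) /
            (Nat.factorial (k + 1 - 2 * q) : ℚ) := by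
  have hmain : ∑ q ∈ Finset.range (k / 2 + 1),
      C q * ((2 * (N : ℚ) + 1) ^ (k + 1 - 2 * q) - 1) / (Nat.factorial (k + 1 - 2 * q) : ℚ)
      = 2^(k+1) * powerSum k N / (Nat.factorial k : ℚ) := by
    have step1 : ∑ q ∈ Finset.range (k / 2 + 1),
        C q * ((2 * (N : ℚ) + 1) ^ (k + 1 - 2 * q) - 1) / (Nat.factorial (k + 1 - 2 * q) : ℚ)
        = ∑ q ∈ range (k/2 + 1), ∑ p ∈ Icc q (k/2),
            C q / (Nat.factorial (2*(p-q)+1) : ℚ) *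
              (2^(k+1-2*p) * powerSum (k-2*p) N / (Nat.factorial (k-2*p) : ℚ)) := by
      apply Finset.sum_congr rfl
      intro q hq
      rw [Finset.mem_range] at hq
      have hq' : q ≤ k/2 := by omega
      rw [key (k+1-2*q) N, reindex k q N hq', Finset.mul_sum, Finset.sum_div]
      apply Finset.sum_congr rfl
      intro p hp
      rw [Finset.mem_Icc] at hp
      have h1 : k - 2*p ≤ k+1-2*q := by omega
      have h2 : k+1-2*q - (k-2*p) = 2*(p-q)+1 := by omega
      have h3 : k+1-2*p = (k-2*p)+1 := by omega
      rw [Nat.cast_choose ℚ h1, h2, h3, pow_succ]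
      have f1 : (Nat.factorial (k+1-2*q) : ℚ) ≠ 0 := Nat.cast_ne_zero.mpr (Nat.factorial_ne_zero _)
      have f2 : (Nat.factorial (k-2*p) : ℚ) ≠ 0 := Nat.cast_ne_zero.mpr (Nat.factorial_ne_zero _)
      have f3 : (Nat.factorial (2*(p-q)+1) : ℚ) ≠ 0 := Nat.cast_ne_zero.mpr (Nat.factorial_ne_zero _)
      field_simp
    rw [step1, tri_swap]
    have step2 : ∀ p ∈ range (k/2+1),
        ∑ q ∈ range (p+1), C q / (Nat.factorial (2*(p-q)+1) : ℚ) *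
            (2^(k+1-2*p) * powerSum (k-2*p) N / (Nat.factorial (k-2*p) : ℚ))
        = (if p = 0 then 1 else 0) *
            (2^(k+1-2*p) * powerSum (k-2*p) N / (Nat.factorial (k-2*p) : ℚ)) := by
      intro p _
      rw [← Finset.sum_mul]
      congr 1
      rcases Nat.eq_zero_or_pos p with h0 | h0
      · subst h0; simp [hC0, Nat.factorial]
      · rw [if_neg (by omega)]
        have := Finset.sum_range_reflect
          (fun q => C q / (Nat.factorial (2*(p-q)+1) : ℚ)) (p+1)
        rw [← this]
        rw [← hCrec p h0]
        apply Finset.sum_congr rfl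
        intro j hj
        rw [Finset.mem_range] at hj
        have : p - (p + 1 - 1 - j) = j := by omega
        rw [this]
        congr 1
    rw [Finset.sum_congr rfl step2]
    simp only [ite_mul, one_mul, zero_mul, Finset.sum_ite_eq', Finset.mem_range]
    simp [Nat.factorial]
  rw [hmain]
  have f1 : (Nat.factorial k : ℚ) ≠ 0 := Nat.cast_ne_zero.mpr (Nat.factorial_ne_zero _)
  field_simp
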